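/- Let G be a finite group acting faithfully and transitively on a finite set X such that the stabilizer of each point of X is nontrivial and every non-identity element of G fixes at most one point of X (i.e., G acts as a Frobenius permutation group on X). If U ≤ G is a subgroup such that every element of U fixes at least one point of X, then there exists a point of X fixed by every element of U. -/

import Mathlib

noncomputable section

open MulAction Finset

/-- in a finite Frobenius permutation group, a subgroup all of whose
elements have a fixed point has a common fixed point. -/
theorem frobenius_common_fixed_point
    (G : Type*) [Group G] [Finite G] (X : Type*) [Finite X] [MulAction G X]
    (hfaith : ∀ g : G, (∀ x : X, g • x = x) → g = 1)
    (htrans : ∀ x y : X, ∃ g : G, g • x = y)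
    (hstab : ∀ x : X, ∃ g : G, g ≠ 1 ∧ g • x = x)
    (hfrob : ∀ g : G, g ≠ 1 → ∀ x y : X, g • x = x → g • y = y → x = y)
    (U : Subgroup G) (hU : ∀ u ∈ U, ∃ x : X, u • x = x) :
    ∃ x : X, ∀ u ∈ U, u • x = x := by
  classical
  haveI : Fintype X := Fintype.ofFinite X
  haveI : Fintype U := Fintype.ofFinite U
  by_contra hcon
  push_neg at hcon
  set n := Fintype.card U with hn
  -- uniqueness of fixed points for nontrivial elements of U
  have huniq : ∀ (u : U), u ≠ 1 → ∀ x y : X, u • x = x → u • y = y → x = y := by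
    intro u hu x y hx hy
    refine hfrob (u : G) (by simpa using hu) x y ?_ ?_
    · simpa [Subgroup.smul_def] using hx
    · simpa [Subgroup.smul_def] using hy
  -- existence of fixed points
  have hex : ∀ u : U, ∃ x : X, u • x = x := by
    intro u
    obtain ⟨x, hx⟩ := hU u u.2
    exact ⟨x, by simpa [Subgroup.smul_def] using hx⟩
  -- stabilizer finsets
  set stF : X → Finset U := fun x => univ.filter (fun u : U => u • x = x) with hstF
  have one_mem_stF : ∀ x, (1 : U) ∈ stF x := fun x => by simp [hstF]
  have stF_card_smul : ∀ (u : U) (x : X), (stF (u • x)).card = (stF x).card := by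
    intro u x
    apply Finset.card_nbij' (fun v => u⁻¹ * v * u) (fun w => u * w * u⁻¹)
    · intro v hv
      simp only [hstF, Finset.mem_coe, mem_filter, mem_univ, true_and, mul_smul] at hv ⊢
      -- hv : v • u • x = u • x ⊢ u⁻¹ • v • u • x = x
      rw [hv, inv_smul_smul]
    · intro w hw
      simp only [hstF, Finset.mem_coe, mem_filter, mem_univ, true_and, mul_smul] at hw ⊢
      rw [inv_smul_smul, hw]
    · intro v _; group
    · intro w _; group
  -- orbit finsets
  set Ob : X → Finset X := fun x => univ.filter (fun y => y ∈ orbit U x) with hOb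
  have mem_Ob_self : ∀ x, x ∈ Ob x := fun x => by
    simp [hOb, MulAction.mem_orbit_self]
  have smul_mem_Ob : ∀ (u : U) (x : X), u • x ∈ Ob x := fun u x => by
    simp only [hOb, mem_filter, mem_univ, true_and]
    exact MulAction.mem_orbit x u
  -- orbit-stabilizer
  have orbit_stab : ∀ x : X, (Ob x).card * (stF x).card = n := by
    intro x
    have h := MulAction.card_orbit_mul_card_stabilizer_eq_card_group U x
    rw [Fintype.card_subtype, Fintype.card_subtype] at h
    rw [hn]
    rw [show (univ.filter (fun u : U => u ∈ stabilizer U x)) = stF x from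
      Finset.filter_congr (fun u _ => by simp [MulAction.mem_stabilizer_iff])] at h
    exact h
  -- stabilizer cards are constant along orbits
  have stF_card_orbit : ∀ x : X, ∀ y ∈ Ob x, (stF y).card = (stF x).card := by
    intro x y hy
    simp only [hOb, mem_filter, mem_univ, true_and, MulAction.mem_orbit_iff] at hy
    obtain ⟨u, rfl⟩ := hy
    exact stF_card_smul u x
  have sum_orbit : ∀ x : X, ∑ y ∈ Ob x, ((stF y).card - 1)
      = (Ob x).card * ((stF x).card - 1) := by
    intro x
    rw [Finset.sum_congr rfl (fun y hy => by rw [stF_card_orbit x y hy]),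
      Finset.sum_const, smul_eq_mul]
  -- the incidence finset
  set P : Finset (U × X) := univ.filter (fun p : U × X => p.1 ≠ 1 ∧ p.1 • p.2 = p.2) with hP
  have count1 : P.card = n - 1 := by
    rw [Finset.card_eq_sum_card_fiberwise
      (f := Prod.fst) (t := univ.filter (fun u : U => u ≠ 1))
      (fun p hp => by
        simp only [hP, Finset.mem_coe, mem_filter, mem_univ, true_and] at hp ⊢
        exact hp.1)]
    have hfib : ∀ u ∈ univ.filter (fun u : U => u ≠ 1),
        (P.filter (fun p => p.1 = u)).card = 1 := by
      intro u hu
      simp only [mem_filter, mem_univ, true_and] at hu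
      obtain ⟨x, hx⟩ := hex u
      rw [Finset.card_eq_one]
      refine ⟨(u, x), ?_⟩
      ext p
      simp only [hP, mem_filter, mem_univ, true_and, mem_singleton]
      constructor
      · rintro ⟨⟨hp1, hp2⟩, hpu⟩
        have h2 : p.2 = x := huniq u hu _ _ (hpu ▸ hp2) hx
        exact Prod.ext hpu h2
      · rintro rfl
        exact ⟨⟨hu, hx⟩, rfl⟩
    rw [Finset.sum_congr rfl hfib, Finset.sum_const, smul_eq_mul, mul_one,
      Finset.filter_ne', Finset.card_erase_of_mem (mem_univ _), Finset.card_univ]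
  have count2 : P.card = ∑ x : X, ((stF x).card - 1) := by
    rw [Finset.card_eq_sum_card_fiberwise (f := Prod.snd) (t := univ)
      (fun p _ => mem_univ _)]
    refine Finset.sum_congr rfl ?_
    intro x _
    have himg : P.filter (fun p => p.2 = x)
        = ((stF x).erase 1).image (fun u => (u, x)) := by
      ext p
      simp only [hP, hstF, mem_filter, mem_univ, true_and, mem_image, mem_erase]
      constructor
      · rintro ⟨⟨h1, h2⟩, hpx⟩
        exact ⟨p.1, ⟨h1, by rw [hpx] at h2; exact h2⟩,
          by rw [← hpx]⟩
      · rintro ⟨u, ⟨h1, h2⟩, rfl⟩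
        exact ⟨⟨h1, h2⟩, rfl⟩
    rw [himg, Finset.card_image_of_injective _ (fun a b h => (Prod.ext_iff.mp h).1),
      Finset.card_erase_of_mem (one_mem_stF x)]
  -- get a nontrivial element of U with its fixed point
  obtain ⟨xa, -⟩ := hU 1 U.one_mem
  obtain ⟨u₀g, hu₀U, hu₀ne⟩ := hcon xa
  set u₀ : U := ⟨u₀g, hu₀U⟩ with hu₀
  have hu₀1 : u₀ ≠ 1 := by
    intro h
    apply hu₀ne
    have : u₀g = 1 := by simpa [hu₀] using congrArg (Subtype.val) h
    rw [this, one_smul]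
  obtain ⟨x₀, hx₀⟩ := hex u₀
  -- stabilizer of x₀ has at least two elements
  have two_le_stF : ∀ (x : X) (u : U), u ≠ 1 → u • x = x → 2 ≤ (stF x).card := by
    intro x u hu hux
    have hsub : ({1, u} : Finset U) ⊆ stF x := by
      intro v hv
      simp only [mem_insert, mem_singleton] at hv
      rcases hv with rfl | rfl
      · exact one_mem_stF x
      · simp [hstF, hux]
    have hc : ({1, u} : Finset U).card = 2 := by
      rw [Finset.card_insert_of_notMem (by simpa using hu.symm), Finset.card_singleton]
    calc 2 = ({1, u} : Finset U).card := hc.symm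
      _ ≤ (stF x).card := Finset.card_le_card hsub
  have hs2 : 2 ≤ (stF x₀).card := two_le_stF x₀ u₀ hu₀1 hx₀
  -- key arithmetic facts for an orbit
  have expand : ∀ x : X, 2 ≤ (stF x).card →
      (Ob x).card * ((stF x).card - 1) + (Ob x).card = n ∧ 2 * (Ob x).card ≤ n := by
    intro x hx2
    have h := orbit_stab x
    constructor
    · have h1 : (stF x).card - 1 + 1 = (stF x).card :=
        Nat.succ_pred_eq_of_pos (lt_of_lt_of_le Nat.zero_lt_two hx2)
      calc (Ob x).card * ((stF x).card - 1) + (Ob x).card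
          = (Ob x).card * (((stF x).card - 1) + 1) := by rw [Nat.mul_add, Nat.mul_one]
        _ = n := by rw [h1, h]
    · calc 2 * (Ob x).card = (Ob x).card * 2 := Nat.mul_comm _ _
        _ ≤ (Ob x).card * (stF x).card := Nat.mul_le_mul_left _ hx2
        _ = n := h
  by_cases hR : ∀ y : X, ∀ u : U, u ≠ 1 → u • y = y → y ∈ Ob x₀
  · -- all points with nontrivial stabilizer lie in the orbit of x₀
    have hzero : ∀ y ∈ (univ : Finset X), y ∉ Ob x₀ → ((stF y).card - 1) = 0 := by
      intro y _ hy
      have hsub : stF y ⊆ {1} := by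
        intro v hv
        simp only [hstF, mem_filter, mem_univ, true_and] at hv
        simp only [mem_singleton]
        by_contra hv1
        exact hy (hR y v hv1 hv)
      have := Finset.card_le_card hsub
      simp only [Finset.card_singleton] at this
      omega
    have hsum : ∑ x : X, ((stF x).card - 1) = ∑ y ∈ Ob x₀, ((stF y).card - 1) :=
      (Finset.sum_subset (Finset.subset_univ _) hzero).symm
    have key : n - 1 = (Ob x₀).card * ((stF x₀).card - 1) := by
      rw [← count1, count2, hsum, sum_orbit]
    obtain ⟨e3, -⟩ := expand x₀ hs2
    have hoc1 : 1 ≤ (Ob x₀).card := Finset.card_pos.mpr ⟨x₀, mem_Ob_self x₀⟩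
    have hoc : (Ob x₀).card = 1 := by
      generalize hA : (Ob x₀).card * ((stF x₀).card - 1) = A at key e3
      omega
    -- so the orbit of x₀ is trivial, contradiction with hcon
    obtain ⟨u1, hu1U, hu1⟩ := hcon x₀
    apply hu1
    have hmem : (⟨u1, hu1U⟩ : U) • x₀ ∈ Ob x₀ := smul_mem_Ob _ _
    obtain ⟨a, ha⟩ := Finset.card_eq_one.mp hoc
    rw [ha, Finset.mem_singleton] at hmem
    have hx₀mem := mem_Ob_self x₀
    rw [ha, Finset.mem_singleton] at hx₀mem
    have : (⟨u1, hu1U⟩ : U) • x₀ = x₀ := by rw [hmem, ← hx₀mem]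
    simpa [Subgroup.smul_def] using this
  · -- two disjoint orbits of points with nontrivial stabilizers: contradiction
    push_neg at hR
    obtain ⟨y, u', hu'1, hu'fix, hyO⟩ := hR
    have hy2 : 2 ≤ (stF y).card := two_le_stF y u' hu'1 hu'fix
    have hdisj : Disjoint (Ob x₀) (Ob y) := by
      rw [Finset.disjoint_left]
      intro z hz hz'
      apply hyO
      simp only [hOb, mem_filter, mem_univ, true_and] at hz hz' ⊢
      have h1 : orbit U z = orbit U x₀ := MulAction.orbit_eq_iff.mpr hz
      have h2 : orbit U z = orbit U y := MulAction.orbit_eq_iff.mpr hz'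
      have hyy : y ∈ orbit U y := MulAction.mem_orbit_self y
      rwa [← h2, h1] at hyy
    have hle : ∑ z ∈ Ob x₀ ∪ Ob y, ((stF z).card - 1) ≤ n - 1 := by
      rw [← count1, count2]
      exact Finset.sum_le_sum_of_subset (Finset.subset_univ _)
    rw [Finset.sum_union hdisj, sum_orbit, sum_orbit] at hle
    obtain ⟨e1, e2⟩ := expand x₀ hs2
    obtain ⟨e3, e4⟩ := expand y hy2
    have hoc1 : 1 ≤ (Ob x₀).card := Finset.card_pos.mpr ⟨x₀, mem_Ob_self x₀⟩
    have hoc1' : 1 ≤ (Ob y).card := Finset.card_pos.mpr ⟨y, mem_Ob_self y⟩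
    generalize hA : (Ob x₀).card * ((stF x₀).card - 1) = A at hle e1
    generalize hB : (Ob y).card * ((stF y).card - 1) = B at hle e3
    omega

end
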